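/- arXiv:math/0102181 — 3 statements merged into one kernel-verified Lean document; each statement's English description precedes it below -/
import Mathlib

section
/- The polynomial f(z₀,z₁,z₂,z₃) = z₀¹⁶ + z₁⁵z₀ + z₂³z₀ + z₁z₂z₃ + z₃² has an isolated critical point at the origin: if (z₀,z₁,z₂,z₃) ∈ ℂ⁴ satisfies the four equations 16z₀¹⁵ + z₁⁵ + z₂³ = 0, 5z₁⁴z₀ + z₂z₃ = 0, 3z₂²z₀ + z₁z₃ = 0, and z₁z₂ + 2z₃ = 0 (the vanishing of all four partial derivatives of f), then z₀ = z₁ = z₂ = z₃ = 0. -/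
/-- The polynomial `f(z₀,z₁,z₂,z₃) = z₀¹⁶ + z₁⁵z₀ + z₂³z₀ + z₁z₂z₃ + z₃²` has an isolated
critical point at the origin: the only common zero of its four partial derivatives is `0`. -/
theorem stmt1 (z₀ z₁ z₂ z₃ : ℂ)
    (h0 : 16 * z₀ ^ 15 + z₁ ^ 5 + z₂ ^ 3 = 0)
    (h1 : 5 * z₁ ^ 4 * z₀ + z₂ * z₃ = 0)
    (h2 : 3 * z₂ ^ 2 * z₀ + z₁ * z₃ = 0)
    (h3 : z₁ * z₂ + 2 * z₃ = 0) :
    z₀ = 0 ∧ z₁ = 0 ∧ z₂ = 0 ∧ z₃ = 0 := by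
  by_cases hz1 : z₁ = 0
  · by_cases hz2 : z₂ = 0
    · subst hz1; subst hz2
      have hz0 : z₀ = 0 := by
        have h : z₀ ^ 15 = 0 := by linear_combination (1/16 : ℂ) * h0
        exact pow_eq_zero_iff (n := 15) (by norm_num) |>.mp h
      have hz3 : z₃ = 0 := by linear_combination (1/2 : ℂ) * h3
      exact ⟨hz0, rfl, rfl, hz3⟩
    · exfalso
      subst hz1
      have hz0 : z₀ = 0 := by
        have h : z₂ ^ 2 * z₀ = 0 := by linear_combination (1/3 : ℂ) * h2
        rcases mul_eq_zero.mp h with h' | h'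
        · exact absurd (pow_eq_zero_iff (n := 2) (by norm_num) |>.mp h') hz2
        · exact h'
      apply hz2
      have h : z₂ ^ 3 = 0 := by
        subst hz0; linear_combination h0
      exact pow_eq_zero_iff (n := 3) (by norm_num) |>.mp h
  · by_cases hz2 : z₂ = 0
    · exfalso
      have hz0 : z₀ = 0 := by
        have h : z₁ ^ 4 * z₀ = 0 := by
          subst hz2; linear_combination (1/5 : ℂ) * h1
        rcases mul_eq_zero.mp h with h' | h'
        · exact absurd (pow_eq_zero_iff (n := 4) (by norm_num) |>.mp h') hz1
        · exact h'
      apply hz1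
      have h : z₁ ^ 5 = 0 := by
        subst hz2; subst hz0; linear_combination h0
      exact pow_eq_zero_iff (n := 5) (by norm_num) |>.mp h
    · exfalso
      -- z₃ = -z₁ z₂ / 2
      have e1 : z₂ ^ 2 = 10 * z₁ ^ 3 * z₀ := by
        have h : z₁ * (z₂ ^ 2 - 10 * z₁ ^ 3 * z₀) = 0 := by
          linear_combination (-2 : ℂ) * h1 + z₂ * h3
        rcases mul_eq_zero.mp h with h' | h'
        · exact absurd h' hz1
        · linear_combination h'
      have e2 : z₁ ^ 2 = 6 * z₂ * z₀ := by
        have h : z₂ * (z₁ ^ 2 - 6 * z₂ * z₀) = 0 := by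
          linear_combination (-2 : ℂ) * h2 + z₁ * h3
        rcases mul_eq_zero.mp h with h' | h'
        · exact absurd h' hz2
        · linear_combination h'
      have e4 : z₂ = 60 * z₁ * z₀ ^ 2 := by
        have h : z₂ * (z₂ - 60 * z₁ * z₀ ^ 2) = 0 := by
          linear_combination e1 + 10 * z₁ * z₀ * e2
        rcases mul_eq_zero.mp h with h' | h'
        · exact absurd h' hz2
        · linear_combination h'
      have e5 : z₁ = 360 * z₀ ^ 3 := by
        have h : z₁ * (z₁ - 360 * z₀ ^ 3) = 0 := by
          linear_combination e2 + 6 * z₀ * e4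
        rcases mul_eq_zero.mp h with h' | h'
        · exact absurd h' hz1
        · linear_combination h'
      have e6 : z₂ = 21600 * z₀ ^ 5 := by rw [e4, e5]; ring
      have hfin : (16124313600016 : ℂ) * z₀ ^ 15 = 0 := by
        rw [e5, e6] at h0; linear_combination h0
      have hz0 : z₀ = 0 := by
        have h : z₀ ^ 15 = 0 := by
          have := mul_eq_zero.mp hfin
          rcases this with h' | h'
          · norm_num at h'
          · exact h'
        exact pow_eq_zero_iff (n := 15) (by norm_num) |>.mp h
      apply hz1
      rw [e5, hz0]; ring
end

section
/- Let Λₙ denote the element Σ_{ζ : ζⁿ = 1} [ζ] of the monoid algebra ℚ[ℂ] (the sum over all n-th roots of unity ζ ∈ ℂ of the basis element indexed by ζ, where ℂ carries its multiplicative monoid structure). Then for all positive integers a and b, Λₐ · Λ_b = gcd(a,b) · Λ_{lcm(a,b)}. -/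
open scoped BigOperators

/-- `Λₙ = Σ_{ζⁿ = 1} [ζ]` in the monoid algebra `ℚ[ℂ]` of the multiplicative
monoid of `ℂ`: the sum over all `n`-th roots of unity of the corresponding
basis element. -/
noncomputable def Lam (n : ℕ) : MonoidAlgebra ℚ ℂ :=
  ∑ ζ ∈ Polynomial.nthRootsFinset n (1 : ℂ), MonoidAlgebra.single ζ (1 : ℚ)

private lemma root_ne_zero {n : ℕ} (hn : 0 < n) {x : ℂ} (hx : x ^ n = 1) : x ≠ 0 := by
  intro h
  rw [h, zero_pow hn.ne'] at hx
  exact one_ne_zero hx.symm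

private lemma pow_dvd_one {x : ℂ} {m n : ℕ} (h : m ∣ n) (hx : x ^ m = 1) : x ^ n = 1 := by
  obtain ⟨k, rfl⟩ := h
  rw [pow_mul, hx, one_pow]

private lemma mem_gcd_iff {a b : ℕ} (ha : 0 < a) (hb : 0 < b) {x : ℂ} :
    x ^ Nat.gcd a b = 1 ↔ x ^ a = 1 ∧ x ^ b = 1 := by
  constructor
  · intro h
    exact ⟨pow_dvd_one (Nat.gcd_dvd_left a b) h, pow_dvd_one (Nat.gcd_dvd_right a b) h⟩
  · rintro ⟨hxa, hxb⟩
    have hx : x ≠ 0 := root_ne_zero ha hxa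
    have hbez := Nat.gcd_eq_gcd_ab a b
    have : x ^ ((Nat.gcd a b : ℤ)) = 1 := by
      rw [hbez, zpow_add₀ hx, zpow_mul, zpow_mul, zpow_natCast, zpow_natCast, hxa, hxb,
        one_zpow, one_zpow, one_mul]
    rwa [zpow_natCast] at this

private lemma lcm_eq_div_mul {a b : ℕ} (ha : 0 < a) (hb : 0 < b) :
    b / Nat.gcd a b * a = Nat.lcm a b := by
  have hg : 0 < Nat.gcd a b := Nat.gcd_pos_of_pos_left b ha
  refine Nat.eq_of_mul_eq_mul_left hg ?_
  rw [← mul_assoc, Nat.mul_div_cancel' (Nat.gcd_dvd_right a b), Nat.gcd_mul_lcm a b, mul_comm]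

private lemma surj {a b : ℕ} (ha : 0 < a) (hb : 0 < b) {η : ℂ} (hη : η ^ Nat.lcm a b = 1) :
    ∃ ζ ξ : ℂ, ζ ^ a = 1 ∧ ξ ^ b = 1 ∧ ζ * ξ = η := by
  have hg : 0 < Nat.gcd a b := Nat.gcd_pos_of_pos_left b ha
  have hη0 : η ≠ 0 := root_ne_zero (Nat.lcm_pos ha hb) hη
  set g := Nat.gcd a b with hgdef
  have hcop : Nat.Coprime (a / g) (b / g) := Nat.coprime_div_gcd_div_gcd hg
  set A := Nat.gcdA (a / g) (b / g) with hA
  set B := Nat.gcdB (a / g) (b / g) with hB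
  have hbez : (1 : ℤ) = (a / g : ℕ) * A + (b / g : ℕ) * B := by
    have h := Nat.gcd_eq_gcd_ab (a / g) (b / g)
    rwa [hcop] at h
  have h1 : ((b / g : ℕ) : ℤ) * a = (Nat.lcm a b : ℤ) := by
    exact_mod_cast congrArg (Nat.cast : ℕ → ℤ) (lcm_eq_div_mul ha hb)
  have h2 : ((a / g : ℕ) : ℤ) * b = (Nat.lcm a b : ℤ) := by
    have := lcm_eq_div_mul hb ha
    rw [Nat.gcd_comm b a, Nat.lcm_comm b a] at this
    exact_mod_cast congrArg (Nat.cast : ℕ → ℤ) this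
  refine ⟨η ^ (((b / g : ℕ) : ℤ) * B), η ^ (((a / g : ℕ) : ℤ) * A), ?_, ?_, ?_⟩
  · rw [← zpow_natCast (η ^ (((b / g : ℕ) : ℤ) * B)) a, ← zpow_mul,
      show ((b / g : ℕ) : ℤ) * B * a = (Nat.lcm a b : ℤ) * B by rw [← h1]; ring,
      zpow_mul, zpow_natCast, hη, one_zpow]
  · rw [← zpow_natCast (η ^ (((a / g : ℕ) : ℤ) * A)) b, ← zpow_mul,
      show ((a / g : ℕ) : ℤ) * A * b = (Nat.lcm a b : ℤ) * A by rw [← h2]; ring,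
      zpow_mul, zpow_natCast, hη, one_zpow]
  · rw [← zpow_add₀ hη0,
      show ((b / g : ℕ) : ℤ) * B + ((a / g : ℕ) : ℤ) * A = 1 by rw [hbez]; ring,
      zpow_one]

open Polynomial

private lemma fiber_card {a b : ℕ} (ha : 0 < a) (hb : 0 < b) {η : ℂ}
    (hη : η ^ Nat.lcm a b = 1) :
    (((nthRootsFinset a (1 : ℂ)) ×ˢ (nthRootsFinset b (1 : ℂ))).filter
      (fun p => p.1 * p.2 = η)).card = Nat.gcd a b := by
  obtain ⟨ζ₀, ξ₀, hζ₀, hξ₀, hprod⟩ := surj ha hb hη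
  have hζ₀0 : ζ₀ ≠ 0 := root_ne_zero ha hζ₀
  have hξ₀0 : ξ₀ ≠ 0 := root_ne_zero hb hξ₀
  have hg : 0 < Nat.gcd a b := Nat.gcd_pos_of_pos_left b ha
  have hcard : (nthRootsFinset (Nat.gcd a b) (1 : ℂ)).card = Nat.gcd a b :=
    (Complex.isPrimitiveRoot_exp _ hg.ne').card_nthRootsFinset
  rw [← hcard]
  apply Finset.card_bij' (fun p _ => p.1 * ζ₀⁻¹) (fun ζ _ => (ζ * ζ₀, ζ⁻¹ * ξ₀))
  · -- maps to nthRootsFinset gcd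
    rintro ⟨z, w⟩ hp
    simp only [Finset.mem_filter, Finset.mem_product, mem_nthRootsFinset ha,
      mem_nthRootsFinset hb] at hp
    obtain ⟨⟨hz, hw⟩, hzw⟩ := hp
    have hz0 : z ≠ 0 := root_ne_zero ha hz
    have hw0 : w ≠ 0 := root_ne_zero hb hw
    rw [mem_nthRootsFinset hg, mem_gcd_iff ha hb]
    constructor
    · rw [mul_pow, hz, inv_pow, hζ₀, inv_one, mul_one]
    · have hzdiv : z * ζ₀⁻¹ = ξ₀ * w⁻¹ := by
        field_simp
        linear_combination hzw - hprod
      rw [hzdiv, mul_pow, hξ₀, inv_pow, hw, inv_one, mul_one]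
  · -- maps back
    intro ζ hζ
    rw [mem_nthRootsFinset hg, mem_gcd_iff ha hb] at hζ
    obtain ⟨hζa, hζb⟩ := hζ
    have hζ0 : ζ ≠ 0 := root_ne_zero ha hζa
    simp only [Finset.mem_filter, Finset.mem_product, mem_nthRootsFinset ha,
      mem_nthRootsFinset hb]
    refine ⟨⟨?_, ?_⟩, ?_⟩
    · rw [mul_pow, hζa, hζ₀, mul_one]
    · rw [mul_pow, inv_pow, hζb, inv_one, hξ₀, mul_one]
    · rw [show ζ * ζ₀ * (ζ⁻¹ * ξ₀) = ζ * ζ⁻¹ * (ζ₀ * ξ₀) by ring,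
        mul_inv_cancel₀ hζ0, one_mul, hprod]
  · rintro ⟨z, w⟩ hp
    simp only [Finset.mem_filter, Finset.mem_product, mem_nthRootsFinset ha,
      mem_nthRootsFinset hb] at hp
    obtain ⟨⟨hz, hw⟩, hzw⟩ := hp
    have hz0 : z ≠ 0 := root_ne_zero ha hz
    have hw0 : w ≠ 0 := root_ne_zero hb hw
    ext <;> simp only []
    · field_simp
    · field_simp
      linear_combination hprod - hzw
  · intro ζ hζ
    rw [mem_nthRootsFinset hg, mem_gcd_iff ha hb] at hζ
    have hζ0 : ζ ≠ 0 := root_ne_zero ha hζ.1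
    field_simp

/-- The Milnor–Orlik multiplication rule `Λₐ · Λ_b = gcd(a,b) · Λ_{lcm(a,b)}`
in the monoid algebra `ℚ[ℂ]`. -/
theorem stmt6 (a b : ℕ) (ha : 0 < a) (hb : 0 < b) :
    Lam a * Lam b = (Nat.gcd a b : ℚ) • Lam (Nat.lcm a b) := by
  classical
  have hl : 0 < Nat.lcm a b := Nat.lcm_pos ha hb
  have hmaps : ∀ p ∈ (nthRootsFinset a (1 : ℂ)) ×ˢ (nthRootsFinset b (1 : ℂ)),
      p.1 * p.2 ∈ nthRootsFinset (Nat.lcm a b) (1 : ℂ) := by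
    rintro ⟨z, w⟩ hp
    simp only [Finset.mem_product, mem_nthRootsFinset ha, mem_nthRootsFinset hb] at hp
    rw [mem_nthRootsFinset hl, mul_pow,
      pow_dvd_one (Nat.dvd_lcm_left a b) hp.1, pow_dvd_one (Nat.dvd_lcm_right a b) hp.2,
      mul_one]
  rw [Lam, Lam, Lam, Finset.sum_mul_sum]
  simp only [MonoidAlgebra.single_mul_single, mul_one]
  rw [← Finset.sum_product', ← Finset.sum_fiberwise_of_maps_to hmaps
    (fun p => MonoidAlgebra.single (p.1 * p.2) (1 : ℚ)), Finset.smul_sum]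
  refine Finset.sum_congr rfl fun η hη => ?_
  have hη' : η ^ Nat.lcm a b = 1 := (mem_nthRootsFinset hl _).mp hη
  have hsum : ∀ p ∈ ((nthRootsFinset a (1 : ℂ)) ×ˢ (nthRootsFinset b (1 : ℂ))).filter
      (fun p => p.1 * p.2 = η), MonoidAlgebra.single (p.1 * p.2) (1 : ℚ)
      = MonoidAlgebra.single η (1 : ℚ) := fun p hp => by
    rw [(Finset.mem_filter.mp hp).2]
  rw [Finset.sum_congr rfl hsum, Finset.sum_const, fiber_card ha hb hη',
    ← Nat.cast_smul_eq_nsmul ℚ]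
end

section
/- Let Λₙ = Σ_{ζ : ζⁿ = 1} [ζ] in the monoid algebra ℚ[ℂ] (ℂ with its multiplicative monoid structure). Then ((1/5)·Λ₁₆ − 1) · ((1/3)·Λ₁₆ − 1) · (Λ₁₆ − 1) · (Λ₂ − 1) = 9·Λ₁₆ − Λ₂ + 1, where 1 denotes the identity element [1] of the algebra. -/
open scoped BigOperators

lemma card_nthRootsFinsetC (n : ℕ) (hn : n ≠ 0) :
    (Polynomial.nthRootsFinset n (1 : ℂ)).card = n :=
  (Complex.isPrimitiveRoot_exp n hn).card_nthRootsFinset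

lemma lam_mul_lam (n m : ℕ) (hn : 0 < n) (hm : 0 < m) (h : m ∣ n) :
    Lam n * Lam m = (m : ℚ) • Lam n := by
  unfold Lam
  rw [Finset.sum_mul_sum, Finset.sum_comm]
  have key : ∀ η ∈ Polynomial.nthRootsFinset m (1 : ℂ),
      (∑ ζ ∈ Polynomial.nthRootsFinset n (1 : ℂ),
        MonoidAlgebra.single ζ (1:ℚ) * MonoidAlgebra.single η (1:ℚ))
      = ∑ ζ ∈ Polynomial.nthRootsFinset n (1 : ℂ), MonoidAlgebra.single ζ (1:ℚ) := by
    intro η hη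
    have hηn : η ^ n = 1 := by
      obtain ⟨k, rfl⟩ := h
      rw [pow_mul, (Polynomial.mem_nthRootsFinset hm 1).mp hη, one_pow]
    have hη0 : η ≠ 0 := by
      intro h0; rw [h0, zero_pow hn.ne'] at hηn; exact one_ne_zero hηn.symm
    refine Finset.sum_nbij' (fun ζ => ζ * η) (fun ζ => ζ * η⁻¹) ?_ ?_ ?_ ?_ ?_
    · intro ζ hζ
      rw [Polynomial.mem_nthRootsFinset hn] at *
      rw [mul_pow, hζ, hηn, mul_one]
    · intro ζ hζ
      rw [Polynomial.mem_nthRootsFinset hn] at *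
      rw [mul_pow, hζ, inv_pow, hηn, inv_one, mul_one]
    · intro ζ _; field_simp
    · intro ζ _; field_simp
    · intro ζ _; rw [MonoidAlgebra.single_mul_single, mul_one]
  rw [Finset.sum_congr rfl key, Finset.sum_const, card_nthRootsFinsetC m hm.ne']
  exact (Nat.cast_smul_eq_nsmul ℚ m _).symm

/-- The Milnor–Orlik computation of the divisor of the characteristic polynomial of
the monodromy of `L₁₆`:
`(Λ₁₆/5 − 1)(Λ₁₆/3 − 1)(Λ₁₆ − 1)(Λ₂ − 1) = 9Λ₁₆ − Λ₂ + 1` in `ℚ[ℂ]`. -/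
theorem stmt7 :
    ((1 / 5 : ℚ) • Lam 16 - 1) * ((1 / 3 : ℚ) • Lam 16 - 1) * (Lam 16 - 1) * (Lam 2 - 1)
      = (9 : ℚ) • Lam 16 - Lam 2 + 1 := by
  have h16 : Lam 16 * Lam 16 = (16 : ℚ) • Lam 16 := by
    have := lam_mul_lam 16 16 (by norm_num) (by norm_num) dvd_rfl
    norm_num at this ⊢; exact this
  have h2 : Lam 16 * Lam 2 = (2 : ℚ) • Lam 16 := by
    have := lam_mul_lam 16 2 (by norm_num) (by norm_num) (by norm_num)
    norm_num at this ⊢; exact this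
  set A := Lam 16; set B := Lam 2
  have e1 : ((1/5:ℚ)•A-1)*((1/3:ℚ)•A-1) = (8/15:ℚ)•A + 1 := by
    rw [sub_mul, mul_sub, mul_sub, smul_mul_smul_comm, h16, smul_smul]
    simp only [one_mul, mul_one]
    module
  have e2 : ((8/15:ℚ)•A + 1) * (A-1) = (9:ℚ)•A - 1 := by
    rw [add_mul, mul_sub, smul_mul_assoc, h16, smul_smul]
    simp only [one_mul, mul_one]
    module
  have e3 : ((9:ℚ)•A - 1) * (B-1) = (9:ℚ)•A - B + 1 := by
    rw [sub_mul, mul_sub, smul_mul_assoc, h2, smul_smul]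
    simp only [one_mul, mul_one]
    module
  rw [e1, e2, e3]
end
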